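/- Fresh induction: Let φ : term → param → Prop and φAbs : abs → param → Prop. Assume: (1) for every xs and p, |varsOf p xs| < |var|; (2) for all xs, x, p, φ (Var xs x) p; (3) for all δ, inp, binp, p, if |dom inp| < |var|, |dom binp| < |var|, ↑(λX. good X ∧ ∀q. φ X q) inp and ↑(λA. goodAbs A ∧ ∀q. φAbs A q) binp, then φ (Op δ inp binp) p; (4) for all xs, x, X, p, if good X, φ X p holds, and x ∉ varsOf p xs, then φAbs (Abs xs x X) p. Then φ X p holds for every good term X and every parameter p, and φAbs A p holds for every good abstraction A and every parameter p. -/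

import Mathlib

open scoped Classical

universe u

section Binding

variable (var varsort index bindex opsym : Type u)

/-! ### Inputs -/

/-- An `(α,β)`-input: a partial function from `α` to `β`. -/
abbrev Input (α β : Type u) : Type u := α → Option β

/-- The domain of an input. -/
def idom {α β : Type u} (inp : Input α β) : Set α := {a | inp a ≠ none}

/-- The componentwise lifting of a predicate to inputs. -/
def liftP {α β : Type u} (P : β → Prop) (inp : Input α β) : Prop :=
  ∀ a b, inp a = some b → P b

/-- The componentwise lifting of a function to inputs. -/
def liftF {α β γ : Type u} (f : β → γ) (inp : Input α β) : Input α γ :=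
  fun a => (inp a).map f

/-- An input is small if its domain has cardinality smaller than that of `var`. -/
def smallDom {α β : Type u} (inp : Input α β) : Prop :=
  Cardinal.mk (idom inp) < Cardinal.mk var

/-! ### Quasiterms -/

mutual
/-- Quasiterms: raw terms before quotienting by alpha-equivalence. -/
inductive QTerm : Type u where
  | qVar : varsort → var → QTerm
  | qOp : opsym → (index → Option QTerm) → (bindex → Option QAbs) → QTerm
/-- Quasiabstractions. -/
inductive QAbs : Type u where
  | qAbs : varsort → var → QTerm → QAbs
end

/-- Transposition of two variables. -/
noncomputable def swapVar (z1 z2 x : var) : var :=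
  if x = z1 then z2 else if x = z2 then z1 else x

/-- Sort-aware transposition of variables (acts only on variables of varsort `zs`). -/
noncomputable def swapVarS (zs xs : varsort) (z1 z2 x : var) : var :=
  if xs = zs then swapVar var z1 z2 x else x

variable {var varsort index bindex opsym}

/-- Swapping of the variables `z1`, `z2` at varsort `zs` in a quasiterm
(transposing them everywhere, including binding positions). -/
noncomputable def qSwap (z1 z2 : var) (zs : varsort) :
    QTerm var varsort index bindex opsym → QTerm var varsort index bindex opsym :=
  QTerm.rec (motive_1 := fun _ => QTerm var varsort index bindex opsym)
    (motive_2 := fun _ => QAbs var varsort index bindex opsym)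
    (motive_3 := fun _ => Option (QTerm var varsort index bindex opsym))
    (motive_4 := fun _ => Option (QAbs var varsort index bindex opsym))
    (fun xs x => .qVar xs (swapVarS var varsort zs xs z1 z2 x))
    (fun d _ _ rinp rbinp => .qOp d rinp rbinp)
    (fun xs x _ rX => .qAbs xs (swapVarS var varsort zs xs z1 z2 x) rX)
    none (fun _ r => some r) none (fun _ r => some r)

/-- Swapping of variables in a quasiabstraction. -/
noncomputable def qSwapAbs (z1 z2 : var) (zs : varsort) :
    QAbs var varsort index bindex opsym → QAbs var varsort index bindex opsym
  | .qAbs xs x X => .qAbs xs (swapVarS var varsort zs xs z1 z2 x) (qSwap z1 z2 zs X)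

/-! ### Freshness and goodness -/

mutual
/-- `QFresh ys y X`: the variable `y` of varsort `ys` has no free occurrence in `X`. -/
inductive QFresh : varsort → var → QTerm var varsort index bindex opsym → Prop where
  | qVar : ∀ {ys y xs x}, (ys, y) ≠ (xs, x) → QFresh ys y (.qVar xs x)
  | qOp : ∀ {ys y d inp binp}, (∀ i X, inp i = some X → QFresh ys y X) →
      (∀ j A, binp j = some A → QFreshAbs ys y A) → QFresh ys y (.qOp d inp binp)
/-- Freshness for quasiabstractions. -/
inductive QFreshAbs : varsort → var → QAbs var varsort index bindex opsym → Prop where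
  | qAbs_bound : ∀ {xs x X}, QFreshAbs xs x (.qAbs xs x X)
  | qAbs_body : ∀ {ys y xs x X}, QFresh ys y X → QFreshAbs ys y (.qAbs xs x X)
end

mutual
/-- Good quasiterms: all constructors branch less than `|var|`. -/
inductive QGood : QTerm var varsort index bindex opsym → Prop where
  | qVar : ∀ {xs x}, QGood (.qVar xs x)
  | qOp : ∀ {d inp binp}, (∀ i X, inp i = some X → QGood X) →
      (∀ j A, binp j = some A → QGoodAbs A) →
      smallDom var inp → smallDom var binp → QGood (.qOp d inp binp)
/-- Good quasiabstractions. -/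
inductive QGoodAbs : QAbs var varsort index bindex opsym → Prop where
  | qAbs : ∀ {xs x X}, QGood X → QGoodAbs (.qAbs xs x X)
end

/-! ### Alpha-equivalence -/

mutual
/-- Alpha-equivalence of quasiterms. -/
inductive Alpha : QTerm var varsort index bindex opsym →
    QTerm var varsort index bindex opsym → Prop where
  | qVar : ∀ {xs x}, Alpha (.qVar xs x) (.qVar xs x)
  | qOp : ∀ {d inp binp inp' binp'},
      (∀ i, inp i = none ↔ inp' i = none) →
      (∀ i X X', inp i = some X → inp' i = some X' → Alpha X X') →
      (∀ j, binp j = none ↔ binp' j = none) →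
      (∀ j A A', binp j = some A → binp' j = some A' → AlphaAbs A A') →
      Alpha (.qOp d inp binp) (.qOp d inp' binp')
/-- Alpha-equivalence of quasiabstractions (the exists-fresh formulation). -/
inductive AlphaAbs : QAbs var varsort index bindex opsym →
    QAbs var varsort index bindex opsym → Prop where
  | qAbs : ∀ {xs x x' X X' y}, y ∉ ({x, x'} : Set var) →
      QFresh xs y X → QFresh xs y X' →
      Alpha (qSwap y x xs X) (qSwap y x' xs X') →
      AlphaAbs (.qAbs xs x X) (.qAbs xs x' X')
end

/-! ### Terms and abstractions as quotients -/

variable (var varsort index bindex opsym)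

/-- Terms: quasiterms modulo alpha-equivalence. -/
def Term : Type u := Quot (@Alpha var varsort index bindex opsym)

/-- Abstractions: quasiabstractions modulo alpha-equivalence. -/
def Abstr : Type u := Quot (@AlphaAbs var varsort index bindex opsym)

variable {var varsort index bindex opsym}

/-- The projection from quasiterms to terms. -/
def tmk : QTerm var varsort index bindex opsym → Term var varsort index bindex opsym :=
  Quot.mk _

/-- The projection from quasiabstractions to abstractions. -/
def amk : QAbs var varsort index bindex opsym → Abstr var varsort index bindex opsym :=
  Quot.mk _

/-- A representative of a term. -/
noncomputable def trep (X : Term var varsort index bindex opsym) :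
    QTerm var varsort index bindex opsym := Quot.out X

/-- A representative of an abstraction. -/
noncomputable def arep (A : Abstr var varsort index bindex opsym) :
    QAbs var varsort index bindex opsym := Quot.out A

/-- Good terms. -/
def good (X : Term var varsort index bindex opsym) : Prop := QGood (trep X)

/-- Good abstractions. -/
def goodAbs (A : Abstr var varsort index bindex opsym) : Prop := QGoodAbs (arep A)

/-- The variable-injection constructor on terms. -/
def Var (xs : varsort) (x : var) : Term var varsort index bindex opsym :=
  tmk (.qVar xs x)

/-- The operation constructor on terms. -/
noncomputable def Op (d : opsym) (inp : Input index (Term var varsort index bindex opsym))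
    (binp : Input bindex (Abstr var varsort index bindex opsym)) :
    Term var varsort index bindex opsym :=
  tmk (.qOp d (liftF trep inp) (liftF arep binp))

/-- The abstraction constructor. -/
noncomputable def Abs (xs : varsort) (x : var) (X : Term var varsort index bindex opsym) :
    Abstr var varsort index bindex opsym :=
  amk (.qAbs xs x (trep X))

/-- Freshness on terms. -/
def fresh (ys : varsort) (y : var) (X : Term var varsort index bindex opsym) : Prop :=
  QFresh ys y (trep X)

/-- Freshness on abstractions. -/
def freshAbs (ys : varsort) (y : var) (A : Abstr var varsort index bindex opsym) : Prop :=
  QFreshAbs ys y (arep A)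

/-- Swapping on terms. -/
noncomputable def tswap (X : Term var varsort index bindex opsym)
    (z1 z2 : var) (zs : varsort) : Term var varsort index bindex opsym :=
  tmk (qSwap z1 z2 zs (trep X))

/-! ### Substitution -/

mutual
/-- The graph of capture-avoiding substitution on quasiterms:
`QSubst X Y y ys Z` means that `Z` is a result of substituting `Y` for the free
occurrences of the variable `y` of varsort `ys` in `X` (along a capture-free
representative). -/
inductive QSubst : QTerm var varsort index bindex opsym →
    QTerm var varsort index bindex opsym → var → varsort →
    QTerm var varsort index bindex opsym → Prop where
  | var_eq : ∀ {Y y ys}, QSubst (.qVar ys y) Y y ys Y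
  | var_ne : ∀ {Y y ys xs x}, (xs, x) ≠ (ys, y) → QSubst (.qVar xs x) Y y ys (.qVar xs x)
  | op : ∀ {Y y ys d inp binp inp' binp'},
      (∀ i, inp i = none ↔ inp' i = none) →
      (∀ i X X', inp i = some X → inp' i = some X' → QSubst X Y y ys X') →
      (∀ j, binp j = none ↔ binp' j = none) →
      (∀ j A A', binp j = some A → binp' j = some A' → QSubstAbs A Y y ys A') →
      QSubst (.qOp d inp binp) Y y ys (.qOp d inp' binp')
/-- The graph of capture-avoiding substitution on quasiabstractions. -/
inductive QSubstAbs : QAbs var varsort index bindex opsym →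
    QTerm var varsort index bindex opsym → var → varsort →
    QAbs var varsort index bindex opsym → Prop where
  | abs : ∀ {Y y ys xs x X X'}, (xs, x) ≠ (ys, y) → QFresh xs x Y →
      QSubst X Y y ys X' → QSubstAbs (.qAbs xs x X) Y y ys (.qAbs xs x X')
end

/-- The graph of capture-avoiding substitution on terms. -/
def SubstRel (X Y : Term var varsort index bindex opsym) (y : var) (ys : varsort)
    (Z : Term var varsort index bindex opsym) : Prop :=
  ∃ qX qZ, tmk qX = X ∧ tmk qZ = Z ∧ QSubst qX (trep Y) y ys qZ

/-- Capture-avoiding substitution on terms: `subst X Y y ys` is `X[Y/y]_ys`. -/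
noncomputable def subst (X Y : Term var varsort index bindex opsym)
    (y : var) (ys : varsort) : Term var varsort index bindex opsym :=
  if h : ∃ Z, SubstRel X Y y ys Z then h.choose else X

/-- The graph of capture-avoiding substitution on abstractions. -/
def SubstAbsRel (A : Abstr var varsort index bindex opsym)
    (Y : Term var varsort index bindex opsym) (y : var) (ys : varsort)
    (B : Abstr var varsort index bindex opsym) : Prop :=
  ∃ qA qB, amk qA = A ∧ amk qB = B ∧ QSubstAbs qA (trep Y) y ys qB

/-- Capture-avoiding substitution on abstractions: `substAbs A Y y ys` is `A[Y/y]_ys`. -/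
noncomputable def substAbs (A : Abstr var varsort index bindex opsym)
    (Y : Term var varsort index bindex opsym) (y : var) (ys : varsort) :
    Abstr var varsort index bindex opsym :=
  if h : ∃ B, SubstAbsRel A Y y ys B then h.choose else A

/-! ### Parallel substitution -/

mutual
/-- The graph of capture-avoiding parallel substitution on quasiterms, along an
assignment `ρ : varsort → var → Option qterm`. -/
inductive QPSubst : QTerm var varsort index bindex opsym →
    (varsort → var → Option (QTerm var varsort index bindex opsym)) →
    QTerm var varsort index bindex opsym → Prop where
  | var_some : ∀ {ρ xs x Y}, ρ xs x = some Y → QPSubst (.qVar xs x) ρ Y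
  | var_none : ∀ {ρ xs x}, ρ xs x = none → QPSubst (.qVar xs x) ρ (.qVar xs x)
  | op : ∀ {ρ d inp binp inp' binp'},
      (∀ i, inp i = none ↔ inp' i = none) →
      (∀ i X X', inp i = some X → inp' i = some X' → QPSubst X ρ X') →
      (∀ j, binp j = none ↔ binp' j = none) →
      (∀ j A A', binp j = some A → binp' j = some A' → QPSubstAbs A ρ A') →
      QPSubst (.qOp d inp binp) ρ (.qOp d inp' binp')
/-- The graph of capture-avoiding parallel substitution on quasiabstractions. -/
inductive QPSubstAbs : QAbs var varsort index bindex opsym →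
    (varsort → var → Option (QTerm var varsort index bindex opsym)) →
    QAbs var varsort index bindex opsym → Prop where
  | abs : ∀ {ρ xs x X X'}, ρ xs x = none →
      (∀ ys y Y, ρ ys y = some Y → QFresh xs x Y) →
      QPSubst X ρ X' → QPSubstAbs (.qAbs xs x X) ρ (.qAbs xs x X')
end

/-- Turning a term-valued assignment into a quasiterm-valued one, by picking
representatives. -/
noncomputable def qassign (ρ : varsort → var → Option (Term var varsort index bindex opsym)) :
    varsort → var → Option (QTerm var varsort index bindex opsym) :=
  fun xs x => (ρ xs x).map trep

/-- The graph of parallel substitution on terms. -/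
def PSubstRel (X : Term var varsort index bindex opsym)
    (ρ : varsort → var → Option (Term var varsort index bindex opsym))
    (Z : Term var varsort index bindex opsym) : Prop :=
  ∃ qX qZ, tmk qX = X ∧ tmk qZ = Z ∧ QPSubst qX (qassign ρ) qZ

/-- Capture-avoiding parallel substitution on terms: `psubst X ρ` is `X[ρ]`. -/
noncomputable def psubst (X : Term var varsort index bindex opsym)
    (ρ : varsort → var → Option (Term var varsort index bindex opsym)) :
    Term var varsort index bindex opsym :=
  if h : ∃ Z, PSubstRel X ρ Z then h.choose else X

/-- The graph of parallel substitution on abstractions. -/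
def PSubstAbsRel (A : Abstr var varsort index bindex opsym)
    (ρ : varsort → var → Option (Term var varsort index bindex opsym))
    (B : Abstr var varsort index bindex opsym) : Prop :=
  ∃ qA qB, amk qA = A ∧ amk qB = B ∧ QPSubstAbs qA (qassign ρ) qB

/-- Capture-avoiding parallel substitution on abstractions. -/
noncomputable def psubstAbs (A : Abstr var varsort index bindex opsym)
    (ρ : varsort → var → Option (Term var varsort index bindex opsym)) :
    Abstr var varsort index bindex opsym :=
  if h : ∃ B, PSubstAbsRel A ρ B then h.choose else A

section Aux
open Cardinal

variable {var varsort index bindex opsym : Type u}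

local notation "Q" => QTerm var varsort index bindex opsym
local notation "QA" => QAbs var varsort index bindex opsym

/-! #### Unfold lemmas for swapping -/

@[simp] lemma qSwap_qVar (z1 z2 : var) (zs xs : varsort) (x : var) :
    qSwap z1 z2 zs (QTerm.qVar xs x : Q) = .qVar xs (swapVarS var varsort zs xs z1 z2 x) := rfl

@[simp] lemma qSwap_qOp (z1 z2 : var) (zs : varsort) (d : opsym)
    (inp : index → Option Q) (binp : bindex → Option QA) :
    qSwap z1 z2 zs (.qOp d inp binp) =
    .qOp d (fun i => (inp i).map (qSwap z1 z2 zs)) (fun j => (binp j).map (qSwapAbs z1 z2 zs)) := by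
  conv_lhs => whnf
  congr 1
  · funext i; cases inp i <;> rfl
  · funext j; rcases binp j with _|⟨xs,x,X⟩ <;> rfl

@[simp] lemma qSwapAbs_qAbs (z1 z2 : var) (zs xs : varsort) (x : var) (X : Q) :
    qSwapAbs z1 z2 zs (QAbs.qAbs xs x X) =
      .qAbs xs (swapVarS var varsort zs xs z1 z2 x) (qSwap z1 z2 zs X) := rfl

/-! #### swapVar basics -/

lemma swapVar_invol (z1 z2 x : var) : swapVar var z1 z2 (swapVar var z1 z2 x) = x := by
  unfold swapVar; split_ifs <;> simp_all

lemma swapVarS_invol (zs xs : varsort) (z1 z2 x : var) :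
    swapVarS var varsort zs xs z1 z2 (swapVarS var varsort zs xs z1 z2 x) = x := by
  unfold swapVarS; split_ifs <;> simp_all [swapVar_invol]

lemma swapVar_inj {z1 z2 x y : var} (h : swapVar var z1 z2 x = swapVar var z1 z2 y) : x = y := by
  have := congrArg (swapVar var z1 z2) h
  rwa [swapVar_invol, swapVar_invol] at this

lemma swapVarS_inj {zs xs : varsort} {z1 z2 x y : var}
    (h : swapVarS var varsort zs xs z1 z2 x = swapVarS var varsort zs xs z1 z2 y) : x = y := by
  have := congrArg (swapVarS var varsort zs xs z1 z2) h
  rwa [swapVarS_invol, swapVarS_invol] at this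

lemma swapVar_left (z1 z2 : var) : swapVar var z1 z2 z1 = z2 := by
  unfold swapVar; simp

lemma swapVar_right (z1 z2 : var) : swapVar var z1 z2 z2 = z1 := by
  unfold swapVar; split_ifs <;> simp_all

lemma swapVar_other {z1 z2 x : var} (h1 : x ≠ z1) (h2 : x ≠ z2) : swapVar var z1 z2 x = x := by
  unfold swapVar; split_ifs <;> simp_all

/-! #### Mutual structural induction -/

lemma qterm_ind {P : Q → Prop} {PA : QA → Prop}
    (hv : ∀ xs x, P (.qVar xs x))
    (ho : ∀ d inp binp, (∀ i X, inp i = some X → P X) →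
      (∀ j A, binp j = some A → PA A) → P (.qOp d inp binp))
    (ha : ∀ xs x X, P X → PA (.qAbs xs x X)) :
    (∀ X, P X) ∧ (∀ A, PA A) := by
  have h : ∀ X : Q, P X := fun X =>
    QTerm.rec (motive_1 := fun X => P X) (motive_2 := fun A => PA A)
      (motive_3 := fun o => ∀ X, o = some X → P X)
      (motive_4 := fun o => ∀ A, o = some A → PA A)
      hv (fun d inp binp r rb => ho d inp binp r rb)
      (fun xs x X r => ha xs x X r)
      (fun _ hX => by cases hX) (fun _ r _ hX => by cases hX; exact r)
      (fun _ hA => by cases hA) (fun _ r _ hA => by cases hA; exact r) X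
  refine ⟨h, fun A => ?_⟩
  rcases A with ⟨xs, x, X⟩
  exact ha xs x X (h X)

/-! #### Swap involutive -/

lemma qSwap_invol (z1 z2 : var) (zs : varsort) :
    (∀ X : Q, qSwap z1 z2 zs (qSwap z1 z2 zs X) = X) ∧
    (∀ A : QA, qSwapAbs z1 z2 zs (qSwapAbs z1 z2 zs A) = A) := by
  apply qterm_ind
  · intro xs x; simp [swapVarS_invol]
  · intro d inp binp hi hb
    simp only [qSwap_qOp]
    congr 1
    · funext i; rcases h : inp i with _|X
      · rfl
      · simp [hi i X h]
    · funext j; rcases h : binp j with _|A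
      · rfl
      · simp [hb j A h]
  · intro xs x X hX; simp [swapVarS_invol, hX]
end Aux
section Aux2
open Cardinal

variable {var varsort index bindex opsym : Type u}

local notation "Q" => QTerm var varsort index bindex opsym
local notation "QA" => QAbs var varsort index bindex opsym

/-- Iterated swapping on quasiterms, by a list of (z1, z2, zs) triples. -/
noncomputable def qSwapL (l : List (var × var × varsort)) (X : Q) : Q :=
  l.foldr (fun t Y => qSwap t.1 t.2.1 t.2.2 Y) X

noncomputable def qSwapLAbs (l : List (var × var × varsort)) (A : QA) : QA :=
  l.foldr (fun t B => qSwapAbs t.1 t.2.1 t.2.2 B) A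

/-- Iterated sorted swapping on variables. -/
noncomputable def swapVarL (l : List (var × var × varsort)) (xs : varsort) (x : var) : var :=
  l.foldr (fun t v => swapVarS var varsort t.2.2 xs t.1 t.2.1 v) x

@[simp] lemma qSwapL_nil (X : Q) : qSwapL [] X = X := rfl
@[simp] lemma qSwapLAbs_nil (A : QA) : qSwapLAbs [] A = A := rfl
@[simp] lemma swapVarL_nil (xs : varsort) (x : var) : swapVarL [] xs x = x := rfl

@[simp] lemma qSwapL_cons (t : var × var × varsort) (l : List (var × var × varsort)) (X : Q) :
    qSwapL (t :: l) X = qSwap t.1 t.2.1 t.2.2 (qSwapL l X) := rfl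
@[simp] lemma qSwapLAbs_cons (t : var × var × varsort) (l : List (var × var × varsort)) (A : QA) :
    qSwapLAbs (t :: l) A = qSwapAbs t.1 t.2.1 t.2.2 (qSwapLAbs l A) := rfl
@[simp] lemma swapVarL_cons (t : var × var × varsort) (l : List (var × var × varsort))
    (xs : varsort) (x : var) :
    swapVarL (t :: l) xs x = swapVarS var varsort t.2.2 xs t.1 t.2.1 (swapVarL l xs x) := rfl

lemma qSwapL_append (l1 l2 : List (var × var × varsort)) (X : Q) :
    qSwapL (l1 ++ l2) X = qSwapL l1 (qSwapL l2 X) := by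
  simp [qSwapL, List.foldr_append]

lemma swapVarL_append (l1 l2 : List (var × var × varsort)) (xs : varsort) (x : var) :
    swapVarL (l1 ++ l2) xs x = swapVarL l1 xs (swapVarL l2 xs x) := by
  simp [swapVarL, List.foldr_append]

lemma swapVarL_inj {l : List (var × var × varsort)} {xs : varsort} {x y : var}
    (h : swapVarL l xs x = swapVarL l xs y) : x = y := by
  induction l with
  | nil => exact h
  | cons t l ih => exact ih (swapVarS_inj h)

@[simp] lemma qSwapL_qVar (l : List (var × var × varsort)) (xs : varsort) (x : var) :
    qSwapL l (QTerm.qVar xs x : Q) = .qVar xs (swapVarL l xs x) := by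
  induction l with
  | nil => rfl
  | cons t l ih => simp [ih]

@[simp] lemma qSwapL_qOp (l : List (var × var × varsort)) (d : opsym)
    (inp : index → Option Q) (binp : bindex → Option QA) :
    qSwapL l (.qOp d inp binp) =
      .qOp d (fun i => (inp i).map (qSwapL l)) (fun j => (binp j).map (qSwapLAbs l)) := by
  induction l with
  | nil => simp only [qSwapL_nil]; congr 1 <;> funext k <;> (first | cases inp k | cases binp k) <;> rfl
  | cons t l ih =>
      simp only [qSwapL_cons, qSwapLAbs_cons, ih, qSwap_qOp]
      congr 1 <;> funext k <;> simp only [Option.map_map] <;> rfl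

@[simp] lemma qSwapLAbs_qAbs (l : List (var × var × varsort)) (xs : varsort) (x : var) (X : Q) :
    qSwapLAbs l (QAbs.qAbs xs x X) = .qAbs xs (swapVarL l xs x) (qSwapL l X) := by
  induction l with
  | nil => rfl
  | cons t l ih => simp [ih]

/-! #### Occurring variables -/

/-- All variables occurring (free or bound) in a quasiterm. -/
noncomputable def occ : Q → Set var :=
  QTerm.rec (motive_1 := fun _ => Set var) (motive_2 := fun _ => Set var)
    (motive_3 := fun _ => Set var) (motive_4 := fun _ => Set var)
    (fun _ x => {x})
    (fun _ _ _ r rb => (⋃ i, r i) ∪ (⋃ j, rb j))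
    (fun _ x _ rX => insert x rX)
    ∅ (fun _ r => r) ∅ (fun _ r => r)

noncomputable def occAbs : QA → Set var
  | .qAbs _ x X => insert x (occ X)

@[simp] lemma occ_qVar (xs : varsort) (x : var) : occ (QTerm.qVar xs x : Q) = {x} := rfl

lemma occ_qOp (d : opsym) (inp : index → Option Q) (binp : bindex → Option QA) :
    occ (QTerm.qOp d inp binp : Q) =
      (⋃ i, (inp i).elim ∅ occ) ∪ (⋃ j, (binp j).elim ∅ occAbs) := by
  conv_lhs => whnf
  refine congrArg₂ (· ∪ ·) ?_ ?_
  · exact Set.iUnion_congr fun i => by cases inp i <;> rfl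
  · exact Set.iUnion_congr fun j => by rcases binp j with _|⟨xs,x,X⟩ <;> rfl

lemma mem_occ_qOp {v : var} {d : opsym} {inp : index → Option Q} {binp : bindex → Option QA} :
    v ∈ occ (QTerm.qOp d inp binp : Q) ↔
      ((∃ i X, inp i = some X ∧ v ∈ occ X) ∨ (∃ j A, binp j = some A ∧ v ∈ occAbs A)) := by
  rw [occ_qOp]
  simp only [Set.mem_union, Set.mem_iUnion]
  constructor
  · rintro (⟨i, hi⟩ | ⟨j, hj⟩)
    · rcases h : inp i with _|X
      · rw [h] at hi; exact absurd hi (by simp)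
      · rw [h] at hi; exact Or.inl ⟨i, X, h, hi⟩
    · rcases h : binp j with _|A
      · rw [h] at hj; exact absurd hj (by simp)
      · rw [h] at hj; exact Or.inr ⟨j, A, h, hj⟩
  · rintro (⟨i, X, h, hv⟩ | ⟨j, A, h, hv⟩)
    · exact Or.inl ⟨i, by rw [h]; exact hv⟩
    · exact Or.inr ⟨j, by rw [h]; exact hv⟩

@[simp] lemma occAbs_qAbs (xs : varsort) (x : var) (X : Q) :
    occAbs (QAbs.qAbs xs x X) = insert x (occ X) := rfl

/-! #### Freshness from non-occurrence -/

lemma fresh_of_not_occ_aux :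
    (∀ X : Q, ∀ ys (y : var), y ∉ occ X → QFresh ys y X) ∧
    (∀ A : QA, ∀ ys (y : var), y ∉ occAbs A → QFreshAbs ys y A) := by
  apply qterm_ind
  · intro xs x ys y hy
    simp only [occ_qVar, Set.mem_singleton_iff] at hy
    exact QFresh.qVar (by simp [Prod.ext_iff, hy])
  · intro d inp binp hi hb ys y hy
    rw [mem_occ_qOp] at hy
    push_neg at hy
    exact QFresh.qOp (fun i X h => hi i X h ys y (hy.1 i X h))
      (fun j A h => hb j A h ys y (hy.2 j A h))
  · intro xs x X hX ys y hy
    simp only [occAbs_qAbs, Set.mem_insert_iff] at hy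
    push_neg at hy
    exact QFreshAbs.qAbs_body (hX ys y hy.2)

lemma fresh_of_not_occ {X : Q} {ys : varsort} {y : var} (h : y ∉ occ X) : QFresh ys y X :=
  fresh_of_not_occ_aux.1 X ys y h

lemma freshAbs_of_not_occ {A : QA} {ys : varsort} {y : var} (h : y ∉ occAbs A) :
    QFreshAbs ys y A :=
  fresh_of_not_occ_aux.2 A ys y h

/-! #### Occurrence under swapping -/

lemma occ_qSwap_subset (z1 z2 : var) (zs : varsort) :
    (∀ X : Q, occ (qSwap z1 z2 zs X) ⊆ occ X ∪ {z1, z2}) ∧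
    (∀ A : QA, occAbs (qSwapAbs z1 z2 zs A) ⊆ occAbs A ∪ {z1, z2}) := by
  have hv : ∀ (xs : varsort) (x : var),
      swapVarS var varsort zs xs z1 z2 x ∈ ({x} : Set var) ∪ {z1, z2} := by
    intro xs x
    unfold swapVarS swapVar
    split_ifs <;> simp
  apply qterm_ind
  · intro xs x
    simpa using hv xs x
  · intro d inp binp hi hb
    intro v hvmem
    rw [qSwap_qOp, mem_occ_qOp] at hvmem
    rcases hvmem with ⟨i, X, h, hmem⟩ | ⟨j, A, h, hmem⟩
    · rcases hX : inp i with _|X0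
      · rw [hX] at h; simp at h
      · rw [hX] at h; simp only [Option.map_some] at h
        obtain rfl : qSwap z1 z2 zs X0 = X := by injection h
        rcases hi i X0 hX hmem with hin | hin
        · exact Or.inl (mem_occ_qOp.mpr (Or.inl ⟨i, X0, hX, hin⟩))
        · exact Or.inr hin
    · rcases hA : binp j with _|A0
      · rw [hA] at h; simp at h
      · rw [hA] at h; simp only [Option.map_some] at h
        obtain rfl : qSwapAbs z1 z2 zs A0 = A := by injection h
        rcases hb j A0 hA hmem with hin | hin
        · exact Or.inl (mem_occ_qOp.mpr (Or.inr ⟨j, A0, hA, hin⟩))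
        · exact Or.inr hin
  · intro xs x X hX v hv'
    simp only [qSwapAbs_qAbs, occAbs_qAbs, Set.mem_insert_iff] at hv' ⊢
    rcases hv' with rfl | hv'
    · have := hv xs x
      simp only [Set.union_def, Set.mem_singleton_iff, Set.mem_setOf_eq] at this
      rcases this with h | h
      · exact Or.inl (Or.inl h)
      · exact Or.inr h
    · rcases hX hv' with h | h
      · exact Or.inl (Or.inr h)
      · exact Or.inr h
end Aux2
section Aux3
open Cardinal

variable {var varsort index bindex opsym : Type u}

local notation "Q" => QTerm var varsort index bindex opsym
local notation "QA" => QAbs var varsort index bindex opsym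

/-! #### Derived induction principles -/

lemma qgood_ind {P : Q → Prop} {PA : QA → Prop}
    (hv : ∀ xs x, P (.qVar xs x))
    (ho : ∀ d (inp : index → Option Q) (binp : bindex → Option QA),
      (∀ i X, inp i = some X → QGood X) → (∀ j A, binp j = some A → QGoodAbs A) →
      smallDom var inp → smallDom var binp →
      (∀ i X, inp i = some X → P X) → (∀ j A, binp j = some A → PA A) →
      P (.qOp d inp binp))
    (ha : ∀ xs x X, QGood X → P X → PA (.qAbs xs x X)) :
    (∀ X : Q, QGood X → P X) ∧ (∀ A : QA, QGoodAbs A → PA A) :=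
  ⟨fun _ h => QGood.rec (motive_1 := fun X _ => P X) (motive_2 := fun A _ => PA A)
      (fun {xs x} => hv xs x)
      (fun {d inp binp} a1 a2 a3 a4 ih1 ih2 => ho d inp binp a1 a2 a3 a4 ih1 ih2)
      (fun {xs x X} a ih => ha xs x X a ih) h,
   fun _ h => QGoodAbs.rec (motive_1 := fun X _ => P X) (motive_2 := fun A _ => PA A)
      (fun {xs x} => hv xs x)
      (fun {d inp binp} a1 a2 a3 a4 ih1 ih2 => ho d inp binp a1 a2 a3 a4 ih1 ih2)
      (fun {xs x X} a ih => ha xs x X a ih) h⟩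

lemma alpha_ind {P : Q → Q → Prop} {PA : QA → QA → Prop}
    (hv : ∀ xs x, P (.qVar xs x) (.qVar xs x))
    (ho : ∀ d (inp inp' : index → Option Q) (binp binp' : bindex → Option QA),
      (∀ i, inp i = none ↔ inp' i = none) →
      (∀ i X X', inp i = some X → inp' i = some X' → Alpha X X') →
      (∀ j, binp j = none ↔ binp' j = none) →
      (∀ j A A', binp j = some A → binp' j = some A' → AlphaAbs A A') →
      (∀ i X X', inp i = some X → inp' i = some X' → P X X') →
      (∀ j A A', binp j = some A → binp' j = some A' → PA A A') →
      P (.qOp d inp binp) (.qOp d inp' binp'))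
    (ha : ∀ xs (x x' : var) X X' y, y ∉ ({x, x'} : Set var) → QFresh xs y X → QFresh xs y X' →
      Alpha (qSwap y x xs X) (qSwap y x' xs X') → P (qSwap y x xs X) (qSwap y x' xs X') →
      PA (.qAbs xs x X) (.qAbs xs x' X')) :
    (∀ X Y, Alpha X Y → P X Y) ∧ (∀ A B, AlphaAbs A B → PA A B) :=
  ⟨fun _ _ h => Alpha.rec (motive_1 := fun X Y _ => P X Y) (motive_2 := fun A B _ => PA A B)
      (fun {xs x} => hv xs x)
      (fun {d inp binp inp' binp'} a1 a2 a3 a4 ih1 ih2 =>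
        ho d inp inp' binp binp' a1 a2 a3 a4 ih1 ih2)
      (fun {xs x x' X X' y} a1 a2 a3 a4 ih => ha xs x x' X X' y a1 a2 a3 a4 ih) h,
   fun _ _ h => AlphaAbs.rec (motive_1 := fun X Y _ => P X Y) (motive_2 := fun A B _ => PA A B)
      (fun {xs x} => hv xs x)
      (fun {d inp binp inp' binp'} a1 a2 a3 a4 ih1 ih2 =>
        ho d inp inp' binp binp' a1 a2 a3 a4 ih1 ih2)
      (fun {xs x x' X X' y} a1 a2 a3 a4 ih => ha xs x x' X X' y a1 a2 a3 a4 ih) h⟩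

lemma qfresh_ind {ys : varsort} {y : var} {P : Q → Prop} {PA : QA → Prop}
    (hv : ∀ xs x, (ys, y) ≠ (xs, x) → P (.qVar xs x))
    (ho : ∀ d (inp : index → Option Q) (binp : bindex → Option QA),
      (∀ i X, inp i = some X → QFresh ys y X) → (∀ j A, binp j = some A → QFreshAbs ys y A) →
      (∀ i X, inp i = some X → P X) → (∀ j A, binp j = some A → PA A) →
      P (.qOp d inp binp))
    (hb : ∀ X, PA (.qAbs ys y X))
    (ha : ∀ xs x X, QFresh ys y X → P X → PA (.qAbs xs x X)) :
    (∀ X : Q, QFresh ys y X → P X) ∧ (∀ A : QA, QFreshAbs ys y A → PA A) :=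
  ⟨fun _ h => QFresh.rec (motive_1 := fun X _ => P X) (motive_2 := fun A _ => PA A)
      (fun {xs x} hne => hv xs x hne)
      (fun {d inp binp} a1 a2 ih1 ih2 => ho d inp binp a1 a2 ih1 ih2)
      (fun {X} => hb X)
      (fun {xs x X} a ih => ha xs x X a ih) h,
   fun _ h => QFreshAbs.rec (motive_1 := fun X _ => P X) (motive_2 := fun A _ => PA A)
      (fun {xs x} hne => hv xs x hne)
      (fun {d inp binp} a1 a2 ih1 ih2 => ho d inp binp a1 a2 ih1 ih2)
      (fun {X} => hb X)
      (fun {xs x X} a ih => ha xs x X a ih) h⟩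

/-! #### Cardinality lemmas -/

lemma mk_union_small (hinf : ℵ₀ ≤ #var) {s t : Set var} (hs : #s < #var) (ht : #t < #var) :
    #(↥(s ∪ t)) < #var :=
  lt_of_le_of_lt (Cardinal.mk_union_le s t) (Cardinal.add_lt_of_lt hinf hs ht)

lemma small_finite (hinf : ℵ₀ ≤ #var) {s : Set var} (hs : s.Finite) : #s < #var :=
  lt_of_lt_of_le hs.lt_aleph0 hinf

lemma exists_notin {s : Set var} (h : #s < #var) : ∃ y : var, y ∉ s := by
  by_contra hc
  push_neg at hc
  have : s = Set.univ := Set.eq_univ_of_forall hc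
  rw [this, Cardinal.mk_univ] at h
  exact lt_irrefl _ h

lemma occ_small (hinf : ℵ₀ ≤ #var) (hreg : (#var).IsRegular) :
    (∀ X : Q, QGood X → #(occ X) < #var) ∧ (∀ A : QA, QGoodAbs A → #(occAbs A) < #var) := by
  apply qgood_ind
  · intro xs x
    simp only [occ_qVar]
    exact small_finite hinf (Set.finite_singleton x)
  · intro d inp binp hg1 hg2 hs1 hs2 ih1 ih2
    rw [occ_qOp]
    apply mk_union_small hinf
    · have he : (⋃ i, (inp i).elim ∅ occ) = ⋃ (i : ↥(idom inp)), (inp i.1).elim ∅ occ := by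
        ext v; simp only [Set.mem_iUnion]
        constructor
        · rintro ⟨i, hv⟩
          rcases h : inp i with _|X
          · rw [h] at hv; exact absurd hv (by simp [Option.elim])
          · exact ⟨⟨i, by simp [idom, h]⟩, hv⟩
        · rintro ⟨i, hv⟩; exact ⟨i.1, hv⟩
      rw [he]
      refine lt_of_le_of_lt Cardinal.mk_iUnion_le_sum_mk ?_
      apply Cardinal.sum_lt_of_isRegular hreg hs1
      rintro ⟨i, hi⟩
      rcases h : inp i with _|X
      · exact absurd h hi
      · simp only [h, Option.elim]
        exact ih1 i X h
    · have he : (⋃ j, (binp j).elim ∅ occAbs) = ⋃ (j : ↥(idom binp)), (binp j.1).elim ∅ occAbs := by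
        ext v; simp only [Set.mem_iUnion]
        constructor
        · rintro ⟨j, hv⟩
          rcases h : binp j with _|A
          · rw [h] at hv; exact absurd hv (by simp [Option.elim])
          · exact ⟨⟨j, by simp [idom, h]⟩, hv⟩
        · rintro ⟨j, hv⟩; exact ⟨j.1, hv⟩
      rw [he]
      refine lt_of_le_of_lt Cardinal.mk_iUnion_le_sum_mk ?_
      apply Cardinal.sum_lt_of_isRegular hreg hs2
      rintro ⟨j, hj⟩
      rcases h : binp j with _|A
      · exact absurd h hj
      · simp only [h, Option.elim]
        exact ih2 j A h
  · intro xs x X hg ih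
    simp only [occAbs_qAbs, Set.insert_eq]
    exact mk_union_small hinf (small_finite hinf (Set.finite_singleton x)) ih

lemma occ_qSwapL_small (hinf : ℵ₀ ≤ #var) {X : Q} (h : #(occ X) < #var)
    (l : List (var × var × varsort)) : #(occ (qSwapL l X)) < #var := by
  induction l with
  | nil => simpa
  | cons t l ih =>
      refine lt_of_le_of_lt (Cardinal.mk_le_mk_of_subset
        ((occ_qSwap_subset t.1 t.2.1 t.2.2).1 (qSwapL l X))) ?_
      exact mk_union_small hinf ih (small_finite hinf ((Set.finite_singleton _).insert _))

/-! #### Domains -/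

lemma idom_map {α β γ : Type u} (f : β → γ) (inp : Input α β) :
    idom (fun a => (inp a).map f) = idom inp := by
  ext a; simp [idom]

lemma smallDom_map {α β γ : Type u} {f : β → γ} {inp : Input α β} (h : smallDom var inp) :
    smallDom var (fun a => (inp a).map f) := by
  unfold smallDom at *
  rwa [idom_map]

lemma smallDom_congr {α β γ : Type u} {inp : Input α β} {inp' : Input α γ}
    (h : ∀ a, inp a = none ↔ inp' a = none) (hs : smallDom var inp) : smallDom var inp' := by
  unfold smallDom at *
  have : idom inp' = idom inp := by
    ext a; simp only [idom, Set.mem_setOf_eq, ne_eq]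
    exact not_congr (h a).symm
  rwa [this]

/-! #### Goodness under swapping -/

lemma good_qSwap_aux (z1 z2 : var) (zs : varsort) :
    (∀ X : Q, QGood X → QGood (qSwap z1 z2 zs X)) ∧
    (∀ A : QA, QGoodAbs A → QGoodAbs (qSwapAbs z1 z2 zs A)) := by
  apply qgood_ind
  · intro xs x; rw [qSwap_qVar]; exact QGood.qVar
  · intro d inp binp h1 h2 s1 s2 ih1 ih2
    rw [qSwap_qOp]
    refine QGood.qOp ?_ ?_ (smallDom_map s1) (smallDom_map s2)
    · intro i X h
      rw [Option.map_eq_some_iff] at h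
      obtain ⟨X0, hX0, rfl⟩ := h
      exact ih1 i X0 hX0
    · intro j A h
      rw [Option.map_eq_some_iff] at h
      obtain ⟨A0, hA0, rfl⟩ := h
      exact ih2 j A0 hA0
  · intro xs x X hg ih
    rw [qSwapAbs_qAbs]
    exact QGoodAbs.qAbs ih

lemma good_qSwap {z1 z2 : var} {zs : varsort} {X : Q} (h : QGood X) :
    QGood (qSwap z1 z2 zs X) := (good_qSwap_aux z1 z2 zs).1 X h

lemma goodAbs_qSwapAbs {z1 z2 : var} {zs : varsort} {A : QA} (h : QGoodAbs A) :
    QGoodAbs (qSwapAbs z1 z2 zs A) := (good_qSwap_aux z1 z2 zs).2 A h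

lemma good_qSwap_iff {z1 z2 : var} {zs : varsort} {X : Q} :
    QGood (qSwap z1 z2 zs X) ↔ QGood X := by
  constructor
  · intro h
    have := good_qSwap (z1 := z1) (z2 := z2) (zs := zs) h
    rwa [(qSwap_invol z1 z2 zs).1 X] at this
  · exact good_qSwap

lemma good_qSwapL {l : List (var × var × varsort)} {X : Q} (h : QGood X) :
    QGood (qSwapL l X) := by
  induction l with
  | nil => simpa
  | cons t l ih => exact good_qSwap ih
end Aux3
section Aux4
open Cardinal

variable {var varsort index bindex opsym : Type u}

local notation "Q" => QTerm var varsort index bindex opsym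
local notation "QA" => QAbs var varsort index bindex opsym

/-! #### Freshness equivariance -/

lemma fresh_swap_aux (z1 z2 : var) (zs ys : varsort) (y : var) :
    (∀ X : Q, QFresh ys y X →
      QFresh ys (swapVarS var varsort zs ys z1 z2 y) (qSwap z1 z2 zs X)) ∧
    (∀ A : QA, QFreshAbs ys y A →
      QFreshAbs ys (swapVarS var varsort zs ys z1 z2 y) (qSwapAbs z1 z2 zs A)) := by
  apply qfresh_ind
  · intro xs x hne
    rw [qSwap_qVar]
    refine QFresh.qVar ?_
    intro hcon
    rw [Prod.mk.injEq] at hcon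
    rcases hcon with ⟨rfl, h2⟩
    exact hne (by rw [Prod.mk.injEq]; exact ⟨rfl, swapVarS_inj h2⟩)
  · intro d inp binp h1 h2 ih1 ih2
    rw [qSwap_qOp]
    refine QFresh.qOp ?_ ?_
    · intro i X h
      rw [Option.map_eq_some_iff] at h
      obtain ⟨X0, hX0, rfl⟩ := h
      exact ih1 i X0 hX0
    · intro j A h
      rw [Option.map_eq_some_iff] at h
      obtain ⟨A0, hA0, rfl⟩ := h
      exact ih2 j A0 hA0
  · intro X
    rw [qSwapAbs_qAbs]
    exact QFreshAbs.qAbs_bound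
  · intro xs x X _ ih
    rw [qSwapAbs_qAbs]
    exact QFreshAbs.qAbs_body ih

lemma fresh_swap_iff {z1 z2 : var} {zs ys : varsort} {y : var} {X : Q} :
    QFresh ys y (qSwap z1 z2 zs X) ↔ QFresh ys (swapVarS var varsort zs ys z1 z2 y) X := by
  constructor
  · intro h
    have := (fresh_swap_aux z1 z2 zs ys y).1 _ h
    rwa [(qSwap_invol z1 z2 zs).1 X] at this
  · intro h
    have := (fresh_swap_aux z1 z2 zs ys _).1 _ h
    rwa [swapVarS_invol] at this

lemma notfresh_swap_iff {z1 z2 : var} {zs ys : varsort} {y : var} {X : Q} :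
    ¬ QFresh ys y (qSwap z1 z2 zs X) ↔ ¬ QFresh ys (swapVarS var varsort zs ys z1 z2 y) X :=
  not_congr fresh_swap_iff

lemma notfresh_swapL {l : List (var × var × varsort)} {ys : varsort} {v : var} {X : Q}
    (h : ¬ QFresh ys v X) : ¬ QFresh ys (swapVarL l ys v) (qSwapL l X) := by
  induction l with
  | nil => simpa
  | cons t l ih =>
      rw [qSwapL_cons, swapVarL_cons, notfresh_swap_iff, swapVarS_invol]
      exact ih

/-! #### Symmetry -/

lemma alpha_symm_aux :
    (∀ X Y : Q, Alpha X Y → Alpha Y X) ∧ (∀ A B : QA, AlphaAbs A B → AlphaAbs B A) := by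
  apply alpha_ind
  · intro xs x; exact Alpha.qVar
  · intro d inp inp' binp binp' hiff1 _ hiff2 _ ih1 ih2
    exact Alpha.qOp (fun i => (hiff1 i).symm)
      (fun i X' X h' h => ih1 i X X' h h')
      (fun j => (hiff2 j).symm)
      (fun j A' A h' h => ih2 j A A' h h')
  · intro xs x x' X X' y hy hf1 hf2 _ ih
    refine AlphaAbs.qAbs (y := y) ?_ hf2 hf1 ih
    simp only [Set.mem_insert_iff, Set.mem_singleton_iff] at hy ⊢
    tauto

lemma alpha_symm {X Y : Q} (h : Alpha X Y) : Alpha Y X := alpha_symm_aux.1 X Y h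
lemma alphaAbs_symm {A B : QA} (h : AlphaAbs A B) : AlphaAbs B A := alpha_symm_aux.2 A B h

/-! #### Goodness along alpha -/

lemma good_of_alpha_aux :
    (∀ X Y : Q, Alpha X Y → (QGood X → QGood Y)) ∧
    (∀ A B : QA, AlphaAbs A B → (QGoodAbs A → QGoodAbs B)) := by
  apply alpha_ind
  · intro xs x _; exact QGood.qVar
  · intro d inp inp' binp binp' hiff1 _ hiff2 _ ih1 ih2 hg
    cases hg with
    | qOp hg1 hg2 hs1 hs2 =>
        refine QGood.qOp ?_ ?_ (smallDom_congr hiff1 hs1) (smallDom_congr hiff2 hs2)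
        · intro i X' h'
          rcases h : inp i with _|X
          · rw [(hiff1 i).mp h] at h'; cases h'
          · exact ih1 i X X' h h' (hg1 i X h)
        · intro j A' h'
          rcases h : binp j with _|A
          · rw [(hiff2 j).mp h] at h'; cases h'
          · exact ih2 j A A' h h' (hg2 j A h)
  · intro xs x x' X X' y _ _ _ _ ih hg
    cases hg with
    | qAbs hgX =>
        refine QGoodAbs.qAbs ?_
        exact good_qSwap_iff.mp (ih (good_qSwap hgX))

lemma good_of_alpha {X Y : Q} (h : Alpha X Y) (hg : QGood X) : QGood Y :=
  good_of_alpha_aux.1 X Y h hg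
lemma goodAbs_of_alphaAbs {A B : QA} (h : AlphaAbs A B) (hg : QGoodAbs A) : QGoodAbs B :=
  good_of_alpha_aux.2 A B h hg

/-! #### Freshness along alpha -/

lemma fresh_of_alpha_aux :
    (∀ X Y : Q, Alpha X Y → ∀ ys (y : var), QFresh ys y X → QFresh ys y Y) ∧
    (∀ A B : QA, AlphaAbs A B → ∀ ys (y : var), QFreshAbs ys y A → QFreshAbs ys y B) := by
  apply alpha_ind
  · intro xs x ys y h; exact h
  · intro d inp inp' binp binp' hiff1 _ hiff2 _ ih1 ih2 ys y hf
    cases hf with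
    | qOp hf1 hf2 =>
        refine QFresh.qOp ?_ ?_
        · intro i X' h'
          rcases h : inp i with _|X
          · rw [(hiff1 i).mp h] at h'; cases h'
          · exact ih1 i X X' h h' ys y (hf1 i X h)
        · intro j A' h'
          rcases h : binp j with _|A
          · rw [(hiff2 j).mp h] at h'; cases h'
          · exact ih2 j A A' h h' ys y (hf2 j A h)
  · intro xs x x' X X' y hy hf1 hf2 _ ih ys y0 hf
    simp only [Set.mem_insert_iff, Set.mem_singleton_iff, not_or] at hy
    obtain ⟨hyx, hyx'⟩ := hy
    have swap_iff : ∀ (a b w : var) (T : Q), QFresh xs w (qSwap a b xs T) ↔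
        QFresh xs (swapVar var a b w) T := by
      intro a b w T
      rw [fresh_swap_iff]
      unfold swapVarS
      simp
    cases hf with
    | qAbs_bound =>
        by_cases hxx' : x = x'
        · subst hxx'; exact QFreshAbs.qAbs_bound
        · refine QFreshAbs.qAbs_body ?_
          have h1 : QFresh xs x (qSwap y x xs X) := by
            rw [swap_iff]
            have : swapVar var y x x = y := by
              unfold swapVar; split_ifs <;> simp_all
            rw [this]; exact hf1
          have h2 := ih xs x h1
          rw [swap_iff] at h2
          rwa [swapVar_other (Ne.symm hyx) hxx'] at h2
    | qAbs_body hfX =>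
        by_cases hb : ys = xs ∧ y0 = x'
        · obtain ⟨rfl, rfl⟩ := hb; exact QFreshAbs.qAbs_bound
        · refine QFreshAbs.qAbs_body ?_
          by_cases hs : ys = xs
          · subst hs
            by_cases hz : y0 = y
            · subst hz; exact hf2
            · have hx' : y0 ≠ x' := fun hcon => hb ⟨rfl, hcon⟩
              have h1 : QFresh ys y0 (qSwap y x ys X) := by
                rw [swap_iff]
                by_cases hx0 : y0 = x
                · subst hx0; rw [swapVar_right]; exact hf1
                · rw [swapVar_other hz hx0]; exact hfX
              have h2 := ih ys y0 h1
              rw [swap_iff] at h2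
              rwa [swapVar_other hz hx'] at h2
          · have h1 : QFresh ys y0 (qSwap y x xs X) := by
              rw [fresh_swap_iff]
              unfold swapVarS
              rw [if_neg hs]
              exact hfX
            have h2 := ih ys y0 h1
            rw [fresh_swap_iff] at h2
            unfold swapVarS at h2
            rw [if_neg hs] at h2
            exact h2

lemma fresh_of_alpha {X Y : Q} (h : Alpha X Y) {ys : varsort} {y : var}
    (hf : QFresh ys y X) : QFresh ys y Y := fresh_of_alpha_aux.1 X Y h ys y hf

lemma notfresh_of_alpha {X Y : Q} (h : Alpha X Y) {ys : varsort} {y : var}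
    (hf : ¬ QFresh ys y X) : ¬ QFresh ys y Y :=
  fun hc => hf (fresh_of_alpha_aux.1 Y X (alpha_symm h) ys y hc)

/-! #### Reflexivity (for good quasiterms) -/

lemma alpha_refl_aux (hinf : ℵ₀ ≤ #var) (hreg : (#var).IsRegular) :
    (∀ X : Q, QGood X → ∀ l, Alpha (qSwapL l X) (qSwapL l X)) ∧
    (∀ A : QA, QGoodAbs A → ∀ l, AlphaAbs (qSwapLAbs l A) (qSwapLAbs l A)) := by
  apply qgood_ind
  · intro xs x l
    rw [qSwapL_qVar]
    exact Alpha.qVar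
  · intro d inp binp _ _ _ _ ih1 ih2 l
    rw [qSwapL_qOp]
    refine Alpha.qOp (fun i => Iff.rfl) ?_ (fun j => Iff.rfl) ?_
    · intro i X X' h h'
      rw [Option.map_eq_some_iff] at h h'
      obtain ⟨X0, hX0, rfl⟩ := h
      obtain ⟨X0', hX0', rfl⟩ := h'
      rw [hX0] at hX0'
      obtain rfl : X0 = X0' := by injection hX0'
      exact ih1 i X0 hX0 l
    · intro j A A' h h'
      rw [Option.map_eq_some_iff] at h h'
      obtain ⟨A0, hA0, rfl⟩ := h
      obtain ⟨A0', hA0', rfl⟩ := h'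
      rw [hA0] at hA0'
      obtain rfl : A0 = A0' := by injection hA0'
      exact ih2 j A0 hA0 l
  · intro xs x X hg ih l
    rw [qSwapLAbs_qAbs]
    obtain ⟨y, hy⟩ := exists_notin (s := occ (qSwapL l X) ∪ {swapVarL l xs x})
      (mk_union_small hinf (occ_qSwapL_small hinf ((occ_small hinf hreg).1 X hg) l)
        (small_finite hinf (Set.finite_singleton _)))
    simp only [Set.mem_union, Set.mem_singleton_iff, not_or] at hy
    refine AlphaAbs.qAbs (y := y) ?_ (fresh_of_not_occ hy.1) (fresh_of_not_occ hy.1)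
      (ih ((y, swapVarL l xs x, xs) :: l))
    simp [hy.2]

lemma alpha_refl (hinf : ℵ₀ ≤ #var) (hreg : (#var).IsRegular) {X : Q} (hg : QGood X) :
    Alpha X X := by
  have := (alpha_refl_aux hinf hreg).1 X hg []
  simpa using this

end Aux4
section Aux5
open Cardinal

variable {var varsort index bindex opsym : Type u}

local notation "Q" => QTerm var varsort index bindex opsym
local notation "QA" => QAbs var varsort index bindex opsym

lemma notfresh_occ {X : Q} {ys : varsort} {v : var} (h : ¬ QFresh ys v X) : v ∈ occ X := by
  by_contra hc
  exact h (fresh_of_not_occ hc)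

lemma swapVarS_same (xs : varsort) (z1 z2 x : var) :
    swapVarS var varsort xs xs z1 z2 x = swapVar var z1 z2 x := by
  unfold swapVarS; rw [if_pos rfl]

lemma swapVarS_ne {zs xs : varsort} (h : xs ≠ zs) (z1 z2 x : var) :
    swapVarS var varsort zs xs z1 z2 x = x := by
  unfold swapVarS; rw [if_neg h]

/-- MASTER lemma: alpha-equivalence is preserved by applying swap lists that induce
the same renaming on free variables. -/
lemma alpha_swapL_aux (hinf : ℵ₀ ≤ #var) (hreg : (#var).IsRegular) :
    (∀ X X' : Q, Alpha X X' → QGood X → ∀ l1 l2 : List (var × var × varsort),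
      (∀ ys (v : var), ¬ QFresh ys v X → swapVarL l1 ys v = swapVarL l2 ys v) →
      Alpha (qSwapL l1 X) (qSwapL l2 X')) ∧
    (∀ A A' : QA, AlphaAbs A A' → QGoodAbs A → ∀ l1 l2 : List (var × var × varsort),
      (∀ ys (v : var), ¬ QFreshAbs ys v A → swapVarL l1 ys v = swapVarL l2 ys v) →
      AlphaAbs (qSwapLAbs l1 A) (qSwapLAbs l2 A')) := by
  apply alpha_ind
  · -- var
    intro xs x _ l1 l2 hc
    rw [qSwapL_qVar, qSwapL_qVar]
    have hfree : ¬ QFresh xs x (QTerm.qVar xs x : Q) := by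
      intro hf
      cases hf with
      | qVar hne => exact hne rfl
    rw [hc xs x hfree]
    exact Alpha.qVar
  · -- op
    intro d inp inp' binp binp' hiff1 hal1 hiff2 hal2 ih1 ih2 hg l1 l2 hc
    cases hg with
    | qOp hg1 hg2 _ _ =>
      rw [qSwapL_qOp, qSwapL_qOp]
      refine Alpha.qOp ?_ ?_ ?_ ?_
      · intro i; rw [Option.map_eq_none_iff, Option.map_eq_none_iff]; exact hiff1 i
      · intro i X Y h h'
        rw [Option.map_eq_some_iff] at h h'
        obtain ⟨X0, hX0, rfl⟩ := h
        obtain ⟨X0', hX0', rfl⟩ := h'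
        refine ih1 i X0 X0' hX0 hX0' (hg1 i X0 hX0) l1 l2 ?_
        intro ys v hfree
        refine hc ys v ?_
        intro hf
        cases hf with
        | qOp hf1 hf2 => exact hfree (hf1 i X0 hX0)
      · intro j; rw [Option.map_eq_none_iff, Option.map_eq_none_iff]; exact hiff2 j
      · intro j A B h h'
        rw [Option.map_eq_some_iff] at h h'
        obtain ⟨A0, hA0, rfl⟩ := h
        obtain ⟨A0', hA0', rfl⟩ := h'
        refine ih2 j A0 A0' hA0 hA0' (hg2 j A0 hA0) l1 l2 ?_
        intro ys v hfree
        refine hc ys v ?_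
        intro hf
        cases hf with
        | qOp hf1 hf2 => exact hfree (hf2 j A0 hA0)
  · -- abs
    intro xs x x' X X' y hy hf1 hf2 hsub ih hgA l1 l2 hc
    have hgX : QGood X := by cases hgA with | qAbs h => exact h
    have hgX' : QGood X' := good_qSwap_iff.mp (good_of_alpha hsub (good_qSwap hgX))
    simp only [Set.mem_insert_iff, Set.mem_singleton_iff, not_or] at hy
    obtain ⟨hyx, hyx'⟩ := hy
    rw [qSwapLAbs_qAbs, qSwapLAbs_qAbs]
    obtain ⟨u, hu⟩ := exists_notin
      (s := occ (qSwapL l1 X) ∪ occ (qSwapL l2 X') ∪ {swapVarL l1 xs x, swapVarL l2 xs x'})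
      (mk_union_small hinf
        (mk_union_small hinf (occ_qSwapL_small hinf ((occ_small hinf hreg).1 X hgX) l1)
          (occ_qSwapL_small hinf ((occ_small hinf hreg).1 X' hgX') l2))
        (small_finite hinf ((Set.finite_singleton _).insert _)))
    simp only [Set.mem_union, Set.mem_insert_iff, Set.mem_singleton_iff, not_or] at hu
    obtain ⟨⟨hu1, hu2⟩, hu3, hu4⟩ := hu
    refine AlphaAbs.qAbs (y := u) ?_ (fresh_of_not_occ hu1) (fresh_of_not_occ hu2) ?_
    · simp only [Set.mem_insert_iff, Set.mem_singleton_iff, not_or]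
      exact ⟨hu3, hu4⟩
    -- body
    have key := ih (good_qSwap hgX)
      (((u, swapVarL l1 xs x, xs) :: l1) ++ [(y, x, xs)])
      (((u, swapVarL l2 xs x', xs) :: l2) ++ [(y, x', xs)]) ?_
    · rw [qSwapL_append, qSwapL_append] at key
      have e1 : qSwapL [(y, x, xs)] (qSwap y x xs X) = X := by
        simp only [qSwapL_cons, qSwapL_nil]
        exact (qSwap_invol y x xs).1 X
      have e2 : qSwapL [(y, x', xs)] (qSwap y x' xs X') = X' := by
        simp only [qSwapL_cons, qSwapL_nil]
        exact (qSwap_invol y x' xs).1 X'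
      rw [e1, e2] at key
      exact key
    -- compatibility condition
    · intro ys v hfree
      have hw : ¬ QFresh ys (swapVarS var varsort xs ys y x v) X := by
        rw [← notfresh_swap_iff]; exact hfree
      by_cases hss : ys = xs
      · subst hss
        rw [swapVarS_same] at hw
        simp only [swapVarL_append, swapVarL_cons, swapVarL_nil, swapVarS_same]
        by_cases hvy : v = y
        · rw [hvy, swapVar_left, swapVar_left, swapVar_right, swapVar_right]
        · have hvx : v ≠ x := by
            intro hveq
            rw [hveq, swapVar_right] at hw
            exact hw hf1
          have hvx' : v ≠ x' := by
            intro hveq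
            have h2 : ¬ QFresh ys v (qSwap y x' ys X') := notfresh_of_alpha hsub hfree
            rw [notfresh_swap_iff, swapVarS_same, hveq, swapVar_right] at h2
            exact h2 hf2
          rw [swapVar_other hvy hvx] at hw ⊢
          rw [swapVar_other hvy hvx']
          -- hw : ¬ QFresh ys v X
          have hfv' : ¬ QFresh ys v X' := by
            have h2 : ¬ QFresh ys v (qSwap y x' ys X') := notfresh_of_alpha hsub hfree
            rw [notfresh_swap_iff, swapVarS_same, swapVar_other hvy hvx'] at h2
            exact h2
          have hπ : swapVarL l1 ys v = swapVarL l2 ys v := by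
            refine hc ys v ?_
            intro hfa
            cases hfa with
            | qAbs_bound => exact hvx rfl
            | qAbs_body h => exact hw h
          have hm1 : swapVarL l1 ys v ∈ occ (qSwapL l1 X) :=
            notfresh_occ (notfresh_swapL hw)
          have hm2 : swapVarL l2 ys v ∈ occ (qSwapL l2 X') :=
            notfresh_occ (notfresh_swapL hfv')
          rw [swapVar_other (fun hcon => hu1 (hcon ▸ hm1) : swapVarL l1 ys v ≠ u)
              (fun hcon => hvx (swapVarL_inj hcon) : swapVarL l1 ys v ≠ swapVarL l1 ys x), hπ,
              swapVar_other (fun hcon => hu2 (hcon ▸ hm2) : swapVarL l2 ys v ≠ u)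
              (fun hcon => hvx' (swapVarL_inj hcon) : swapVarL l2 ys v ≠ swapVarL l2 ys x')]
      · -- different sort: everything is the identity at sort ys
        rw [swapVarS_ne hss] at hw
        simp only [swapVarL_append, swapVarL_cons, swapVarL_nil, swapVarS_ne hss]
        refine hc ys v ?_
        intro hfa
        cases hfa with
        | qAbs_bound => exact hss rfl
        | qAbs_body h => exact hw h

lemma alpha_swapL (hinf : ℵ₀ ≤ #var) (hreg : (#var).IsRegular) {X X' : Q}
    (h : Alpha X X') (hg : QGood X) {l1 l2 : List (var × var × varsort)}
    (hc : ∀ ys (v : var), ¬ QFresh ys v X → swapVarL l1 ys v = swapVarL l2 ys v) :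
    Alpha (qSwapL l1 X) (qSwapL l2 X') :=
  (alpha_swapL_aux hinf hreg).1 X X' h hg l1 l2 hc

lemma alpha_relist (hinf : ℵ₀ ≤ #var) (hreg : (#var).IsRegular) {X : Q} (hg : QGood X)
    {l1 l2 : List (var × var × varsort)}
    (hc : ∀ ys (v : var), ¬ QFresh ys v X → swapVarL l1 ys v = swapVarL l2 ys v) :
    Alpha (qSwapL l1 X) (qSwapL l2 X) :=
  alpha_swapL hinf hreg (alpha_refl hinf hreg hg) hg hc

end Aux5
section Aux6
open Cardinal

variable {var varsort index bindex opsym : Type u}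

local notation "Q" => QTerm var varsort index bindex opsym
local notation "QA" => QAbs var varsort index bindex opsym

lemma swap_comp (u a b m : var) (hmu : m ≠ u) (hmb : m ≠ b) :
    swapVar var u b (swapVar var b a m) = swapVar var u a m := by
  by_cases hma : m = a
  · simp only [hma, swapVar_right]
  · rw [swapVar_other hmb hma, swapVar_other hmu hmb, swapVar_other hmu hma]

lemma alpha_trans_aux (hinf : ℵ₀ ≤ #var) (hreg : (#var).IsRegular) :
    (∀ X : Q, QGood X → ∀ l (Y Z : Q),
      Alpha (qSwapL l X) Y → Alpha Y Z → Alpha (qSwapL l X) Z) ∧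
    (∀ A : QA, QGoodAbs A → ∀ l (B C : QA),
      AlphaAbs (qSwapLAbs l A) B → AlphaAbs B C → AlphaAbs (qSwapLAbs l A) C) := by
  apply qgood_ind
  · -- var
    intro xs x l Y Z h1 h2
    rw [qSwapL_qVar] at h1 ⊢
    cases h1
    exact h2
  · -- op
    intro d inp binp _ _ _ _ ih1 ih2 l Y Z h1 h2
    rw [qSwapL_qOp] at h1 ⊢
    cases h1 with
    | qOp hiff1 hal1 hiff2 hal2 =>
      rename_i yinp ybinp
      cases h2 with
      | qOp giff1 gal1 giff2 gal2 =>
        refine Alpha.qOp (fun i => (hiff1 i).trans (giff1 i)) ?_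
          (fun j => (hiff2 j).trans (giff2 j)) ?_
        · intro i Xm Z0 hm hz
          rw [Option.map_eq_some_iff] at hm
          obtain ⟨X0, hX0, rfl⟩ := hm
          rcases hY : yinp i with _|Y0
          case none =>
            have hnone : inp i = none := by
              have := (hiff1 i).mpr hY
              simpa using this
            rw [hnone] at hX0
            cases hX0
          case some =>
            have a1 := hal1 i (qSwapL l X0) Y0
              (by show (inp i).map (qSwapL l) = some (qSwapL l X0); rw [hX0]; rfl) hY
            have a2 := gal1 i Y0 Z0 hY hz
            exact ih1 i X0 hX0 l Y0 Z0 a1 a2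
        · intro j Am C0 hm hz
          rw [Option.map_eq_some_iff] at hm
          obtain ⟨A0, hA0, rfl⟩ := hm
          rcases hB : ybinp j with _|B0
          case none =>
            have hnone : binp j = none := by
              have := (hiff2 j).mpr hB
              simpa using this
            rw [hnone] at hA0
            cases hA0
          case some =>
            have a1 := hal2 j (qSwapLAbs l A0) B0
              (by show (binp j).map (qSwapLAbs l) = some (qSwapLAbs l A0); rw [hA0]; rfl) hB
            have a2 := gal2 j B0 C0 hB hz
            exact ih2 j A0 hA0 l B0 C0 a1 a2
  · -- abs
    intro xs x X hgX ihP l B C h1 h2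
    rw [qSwapLAbs_qAbs] at h1 ⊢
    cases h1 with
    | qAbs hy1 hfa hfb d1 =>
    rename_i x' Y0 y1
    cases h2 with
    | qAbs hy2 hfc hfd d2 =>
    rename_i x'' Z0 y2
    simp only [Set.mem_insert_iff, Set.mem_singleton_iff, not_or] at hy1 hy2
    have glX : QGood (qSwapL l X) := good_qSwapL hgX
    have gY0 : QGood Y0 := good_qSwap_iff.mp (good_of_alpha d1 (good_qSwap glX))
    have gZ0 : QGood Z0 := good_qSwap_iff.mp (good_of_alpha d2 (good_qSwap gY0))
    obtain ⟨u, hu⟩ := exists_notin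
      (s := occ (qSwapL l X) ∪ occ Y0 ∪ occ Z0 ∪
        {swapVarL l xs x, x', x'', y1, y2})
      (mk_union_small hinf (mk_union_small hinf (mk_union_small hinf
        (occ_qSwapL_small hinf ((occ_small hinf hreg).1 X hgX) l)
        ((occ_small hinf hreg).1 Y0 gY0)) ((occ_small hinf hreg).1 Z0 gZ0))
        (small_finite hinf (Set.toFinite _)))
    simp only [Set.mem_union, Set.mem_insert_iff, Set.mem_singleton_iff, not_or] at hu
    obtain ⟨⟨⟨hu1, hu2⟩, hu3⟩, hu4, hu5, hu6, hu7, hu8⟩ := hu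
    refine AlphaAbs.qAbs (y := u) ?_ (fresh_of_not_occ hu1) (fresh_of_not_occ hu3) ?_
    · simp only [Set.mem_insert_iff, Set.mem_singleton_iff, not_or]
      exact ⟨hu4, hu6⟩
    -- the body
    have sA : Alpha (qSwapL ((u, swapVarL l xs x, xs) :: l) X)
        (qSwapL ((u, y1, xs) :: (y1, swapVarL l xs x, xs) :: l) X) := by
      refine alpha_relist hinf hreg hgX ?_
      intro ys v hfree
      simp only [swapVarL_cons]
      by_cases hss : ys = xs
      · subst hss
        simp only [swapVarS_same]
        have hm : swapVarL l ys v ∈ occ (qSwapL l X) :=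
          notfresh_occ (notfresh_swapL hfree)
        have hmu : swapVarL l ys v ≠ u := fun hcon => hu1 (hcon ▸ hm)
        have hmy1 : swapVarL l ys v ≠ y1 := by
          intro hcon
          exact (notfresh_swapL hfree) (hcon ▸ hfa)
        exact (swap_comp u (swapVarL l ys x) y1 (swapVarL l ys v) hmu hmy1).symm
      · simp only [swapVarS_ne hss]
    have sB : Alpha (qSwapL [(u, y1, xs)] (qSwap y1 (swapVarL l xs x) xs (qSwapL l X)))
        (qSwapL [(u, y1, xs)] (qSwap y1 x' xs Y0)) := by
      refine alpha_swapL hinf hreg d1 (good_qSwap glX) ?_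
      intro ys v _
      rfl
    have sC : Alpha (qSwapL [(u, y1, xs), (y1, x', xs)] Y0) (qSwapL [(u, x', xs)] Y0) := by
      refine alpha_relist hinf hreg gY0 ?_
      intro ys v hfree
      simp only [swapVarL_cons, swapVarL_nil]
      by_cases hss : ys = xs
      · subst hss
        simp only [swapVarS_same]
        have hmu : v ≠ u := fun hcon => hu2 (hcon ▸ notfresh_occ hfree)
        have hmy1 : v ≠ y1 := by
          intro hcon
          exact hfree (hcon ▸ hfb)
        exact swap_comp u x' y1 v hmu hmy1
      · simp only [swapVarS_ne hss]
    have c1 := ihP ((u, swapVarL l xs x, xs) :: l) _ _ sA sB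
    have c2 := ihP ((u, swapVarL l xs x, xs) :: l) _ _ c1 sC
    have s2a : Alpha (qSwapL [(u, x', xs)] Y0) (qSwapL [(u, y2, xs), (y2, x', xs)] Y0) := by
      refine alpha_relist hinf hreg gY0 ?_
      intro ys v hfree
      simp only [swapVarL_cons, swapVarL_nil]
      by_cases hss : ys = xs
      · subst hss
        simp only [swapVarS_same]
        have hmu : v ≠ u := fun hcon => hu2 (hcon ▸ notfresh_occ hfree)
        have hmy2 : v ≠ y2 := by
          intro hcon
          exact hfree (hcon ▸ hfc)
        exact (swap_comp u x' y2 v hmu hmy2).symm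
      · simp only [swapVarS_ne hss]
    have s2b : Alpha (qSwapL [(u, y2, xs)] (qSwap y2 x' xs Y0))
        (qSwapL [(u, y2, xs)] (qSwap y2 x'' xs Z0)) := by
      refine alpha_swapL hinf hreg d2 (good_qSwap gY0) ?_
      intro ys v _
      rfl
    have s2c : Alpha (qSwapL [(u, y2, xs), (y2, x'', xs)] Z0) (qSwapL [(u, x'', xs)] Z0) := by
      refine alpha_relist hinf hreg gZ0 ?_
      intro ys v hfree
      simp only [swapVarL_cons, swapVarL_nil]
      by_cases hss : ys = xs
      · subst hss
        simp only [swapVarS_same]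
        have hmu : v ≠ u := fun hcon => hu3 (hcon ▸ notfresh_occ hfree)
        have hmy2 : v ≠ y2 := by
          intro hcon
          exact hfree (hcon ▸ hfd)
        exact swap_comp u x'' y2 v hmu hmy2
      · simp only [swapVarS_ne hss]
    have c3 := ihP ((u, swapVarL l xs x, xs) :: l) _ _ c2 s2a
    have c4 := ihP ((u, swapVarL l xs x, xs) :: l) _ _ c3 s2b
    have c5 := ihP ((u, swapVarL l xs x, xs) :: l) _ _ c4 s2c
    exact c5

lemma alpha_trans (hinf : ℵ₀ ≤ #var) (hreg : (#var).IsRegular) {X Y Z : Q}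
    (hg : QGood X) (h1 : Alpha X Y) (h2 : Alpha Y Z) : Alpha X Z := by
  have := (alpha_trans_aux hinf hreg).1 X hg [] Y Z (by simpa using h1) h2
  simpa using this

lemma alphaAbs_trans (hinf : ℵ₀ ≤ #var) (hreg : (#var).IsRegular) {A B C : QA}
    (hg : QGoodAbs A) (h1 : AlphaAbs A B) (h2 : AlphaAbs B C) : AlphaAbs A C := by
  have := (alpha_trans_aux hinf hreg).2 A hg [] B C (by simpa using h1) h2
  simpa using this

end Aux6
section Aux7
open Cardinal

variable {var varsort index bindex opsym : Type u}

local notation "Q" => QTerm var varsort index bindex opsym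
local notation "QA" => QAbs var varsort index bindex opsym

/-! #### Collapsing the equivalence closure -/

lemma good_eqv {X Y : Q} (h : Relation.EqvGen Alpha X Y) : QGood X ↔ QGood Y := by
  induction h with
  | rel a b hab => exact ⟨good_of_alpha hab, good_of_alpha (alpha_symm hab)⟩
  | refl a => exact Iff.rfl
  | symm a b _ ih => exact ih.symm
  | trans a b c _ _ ih1 ih2 => exact ih1.trans ih2

lemma goodAbs_eqv {A B : QA} (h : Relation.EqvGen AlphaAbs A B) : QGoodAbs A ↔ QGoodAbs B := by
  induction h with
  | rel a b hab => exact ⟨goodAbs_of_alphaAbs hab, goodAbs_of_alphaAbs (alphaAbs_symm hab)⟩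
  | refl a => exact Iff.rfl
  | symm a b _ ih => exact ih.symm
  | trans a b c _ _ ih1 ih2 => exact ih1.trans ih2

lemma alpha_of_eqv (hinf : ℵ₀ ≤ #var) (hreg : (#var).IsRegular) {X Y : Q}
    (h : Relation.EqvGen Alpha X Y) : QGood X → Alpha X Y := by
  induction h with
  | rel a b hab => exact fun _ => hab
  | refl a => exact fun hg => alpha_refl hinf hreg hg
  | symm a b hab ih => exact fun hgb => alpha_symm (ih ((good_eqv hab).mpr hgb))
  | trans a b c hab hbc ih1 ih2 =>
      exact fun hga => alpha_trans hinf hreg hga (ih1 hga) (ih2 ((good_eqv hab).mp hga))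

lemma alphaAbs_of_eqv (hinf : ℵ₀ ≤ #var) (hreg : (#var).IsRegular) {A B : QA}
    (h : Relation.EqvGen AlphaAbs A B) : QGoodAbs A → AlphaAbs A B := by
  induction h with
  | rel a b hab => exact fun _ => hab
  | refl a =>
      intro hg
      rcases a with ⟨xs, x, X⟩
      have := (alpha_refl_aux hinf hreg).2 _ hg []
      simpa using this
  | symm a b hab ih => exact fun hgb => alphaAbs_symm (ih ((goodAbs_eqv hab).mpr hgb))
  | trans a b c hab hbc ih1 ih2 =>
      exact fun hga => alphaAbs_trans hinf hreg hga (ih1 hga) (ih2 ((goodAbs_eqv hab).mp hga))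

/-! #### Quotient-level lemmas -/

lemma eqv_out (qX : Q) : Relation.EqvGen Alpha qX (trep (tmk qX)) := by
  apply Quot.eq.mp
  exact (Quot.out_eq (tmk qX)).symm

lemma eqvAbs_out (qA : QA) : Relation.EqvGen AlphaAbs qA (arep (amk qA)) := by
  apply Quot.eq.mp
  exact (Quot.out_eq (amk qA)).symm

lemma good_tmk {qX : Q} (hg : QGood qX) : good (tmk qX) :=
  (good_eqv (eqv_out qX)).mp hg

lemma goodAbs_amk {qA : QA} (hg : QGoodAbs qA) : goodAbs (amk qA) :=
  (goodAbs_eqv (eqvAbs_out qA)).mp hg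

lemma alpha_out (hinf : ℵ₀ ≤ #var) (hreg : (#var).IsRegular) {qX : Q} (hg : QGood qX) :
    Alpha qX (trep (tmk qX)) :=
  alpha_of_eqv hinf hreg (eqv_out qX) hg

lemma alphaAbs_out (hinf : ℵ₀ ≤ #var) (hreg : (#var).IsRegular) {qA : QA} (hg : QGoodAbs qA) :
    AlphaAbs qA (arep (amk qA)) :=
  alphaAbs_of_eqv hinf hreg (eqvAbs_out qA) hg

lemma Op_tmk (hinf : ℵ₀ ≤ #var) (hreg : (#var).IsRegular) {d : opsym}
    {qinp : index → Option Q} {qbinp : bindex → Option QA}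
    (hgi : ∀ i X, qinp i = some X → QGood X)
    (hgb : ∀ j A, qbinp j = some A → QGoodAbs A) :
    Op d (fun i => (qinp i).map tmk) (fun j => (qbinp j).map amk) = tmk (.qOp d qinp qbinp) := by
  unfold Op tmk
  apply Quot.sound
  refine Alpha.qOp ?_ ?_ ?_ ?_
  · intro i
    rcases hq : qinp i with _ | X0 <;> simp [liftF, hq]
    · rfl
    · exact fun h => Option.some_ne_none _ h
  · intro i X X' h h'
    rcases hX0 : qinp i with _ | X0
    · rw [hX0] at h'; cases h'
    · rw [hX0] at h'
      obtain rfl : X0 = X' := by injection h'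
      simp only [liftF, hX0, Option.map_some] at h
      obtain rfl : trep (tmk X0) = X := by injection h
      exact alpha_symm (alpha_out hinf hreg (hgi i X0 hX0))
  · intro j
    simp [liftF]
  · intro j A A' h h'
    simp only [liftF, Option.map_map, Option.map_eq_some_iff, Function.comp] at h
    obtain ⟨A0, hA0, rfl⟩ := h
    rw [hA0] at h'
    obtain rfl : A0 = A' := by injection h'
    exact alphaAbs_symm (alphaAbs_out hinf hreg (hgb j A0 hA0))

lemma Abs_tmk (hinf : ℵ₀ ≤ #var) (hreg : (#var).IsRegular) {xs : varsort} {x : var}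
    {qX : Q} (hg : QGood qX) :
    Abs xs x (tmk qX) = amk (.qAbs xs x qX) := by
  unfold Abs amk
  apply Quot.sound
  have hgrep : QGood (trep (tmk qX)) := (good_eqv (eqv_out qX)).mp hg
  have hal : Alpha (trep (tmk qX)) qX := alpha_symm (alpha_out hinf hreg hg)
  obtain ⟨u, hu⟩ := exists_notin (s := occ (trep (tmk qX)) ∪ occ qX ∪ {x})
    (mk_union_small hinf (mk_union_small hinf ((occ_small hinf hreg).1 _ hgrep)
      ((occ_small hinf hreg).1 _ hg)) (small_finite hinf (Set.finite_singleton _)))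
  simp only [Set.mem_union, Set.mem_singleton_iff, not_or] at hu
  obtain ⟨⟨hu1, hu2⟩, hu3⟩ := hu
  refine AlphaAbs.qAbs (y := u) ?_ (fresh_of_not_occ hu1) (fresh_of_not_occ hu2) ?_
  · simp only [Set.mem_insert_iff, Set.mem_singleton_iff, not_or]
    exact ⟨hu3, hu3⟩
  · exact alpha_swapL hinf hreg hal hgrep (l1 := [(u, x, xs)]) (l2 := [(u, x, xs)])
      (fun _ _ _ => rfl)

end Aux7
section Aux8
open Cardinal

variable {var varsort index bindex opsym : Type u}

local notation "Q" => QTerm var varsort index bindex opsym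
local notation "QA" => QAbs var varsort index bindex opsym

lemma fresh_main_aux (hinf : ℵ₀ ≤ #var) (hreg : (#var).IsRegular)
    {param : Type u} (varsOf : param → varsort → Set var)
    (φ : Term var varsort index bindex opsym → param → Prop)
    (φAbs : Abstr var varsort index bindex opsym → param → Prop)
    (h1 : ∀ xs p, Cardinal.mk (varsOf p xs) < Cardinal.mk var)
    (h2 : ∀ xs x p, φ (Var xs x) p)
    (h3 : ∀ d inp binp p, smallDom var inp → smallDom var binp →
      liftP (fun X => good X ∧ ∀ q, φ X q) inp →
      liftP (fun A => goodAbs A ∧ ∀ q, φAbs A q) binp →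
      φ (Op d inp binp) p)
    (h4 : ∀ xs x X p, good X → φ X p → x ∉ varsOf p xs → φAbs (Abs xs x X) p) :
    (∀ X : Q, QGood X → ∀ l p, φ (tmk (qSwapL l X)) p) ∧
    (∀ A : QA, QGoodAbs A → ∀ l p, φAbs (amk (qSwapLAbs l A)) p) := by
  apply qgood_ind
  · -- var
    intro xs x l p
    rw [qSwapL_qVar]
    exact h2 xs (swapVarL l xs x) p
  · -- op
    intro d inp binp hg1 hg2 hs1 hs2 ih1 ih2 l p
    rw [qSwapL_qOp]
    rw [← Op_tmk hinf hreg (qinp := fun i => (inp i).map (qSwapL l))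
      (qbinp := fun j => (binp j).map (qSwapLAbs l)) ?_ ?_]
    · refine h3 d _ _ p (smallDom_map (smallDom_map hs1)) (smallDom_map (smallDom_map hs2))
        ?_ ?_
      · intro i T h
        rw [Option.map_eq_some_iff] at h
        obtain ⟨Xm, hXm, rfl⟩ := h
        rw [Option.map_eq_some_iff] at hXm
        obtain ⟨X0, hX0, rfl⟩ := hXm
        exact ⟨good_tmk (good_qSwapL (hg1 i X0 hX0)), fun q => ih1 i X0 hX0 l q⟩
      · intro j T h
        rw [Option.map_eq_some_iff] at h
        obtain ⟨Am, hAm, rfl⟩ := h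
        rw [Option.map_eq_some_iff] at hAm
        obtain ⟨A0, hA0, rfl⟩ := hAm
        refine ⟨goodAbs_amk ?_, fun q => ih2 j A0 hA0 l q⟩
        have := hg2 j A0 hA0
        induction l with
        | nil => simpa
        | cons t l ih => exact goodAbs_qSwapAbs ih
    · intro i X h
      rw [Option.map_eq_some_iff] at h
      obtain ⟨X0, hX0, rfl⟩ := h
      exact good_qSwapL (hg1 i X0 hX0)
    · intro j A h
      rw [Option.map_eq_some_iff] at h
      obtain ⟨A0, hA0, rfl⟩ := h
      have := hg2 j A0 hA0
      induction l with
      | nil => simpa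
      | cons t l ih => exact goodAbs_qSwapAbs ih
  · -- abs
    intro xs x X hgX ih l p
    rw [qSwapLAbs_qAbs]
    have glX : QGood (qSwapL l X) := good_qSwapL hgX
    obtain ⟨y, hy⟩ := exists_notin
      (s := occ (qSwapL l X) ∪ {swapVarL l xs x} ∪ varsOf p xs)
      (mk_union_small hinf (mk_union_small hinf
        (occ_qSwapL_small hinf ((occ_small hinf hreg).1 X hgX) l)
        (small_finite hinf (Set.finite_singleton _))) (h1 xs p))
    simp only [Set.mem_union, Set.mem_singleton_iff, not_or] at hy
    obtain ⟨⟨hy1, hy2⟩, hy3⟩ := hy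
    have eq1 : amk (QAbs.qAbs xs (swapVarL l xs x) (qSwapL l X)) =
        amk (QAbs.qAbs xs y (qSwap y (swapVarL l xs x) xs (qSwapL l X))) := by
      apply Quot.sound
      obtain ⟨z, hz⟩ := exists_notin
        (s := occ (qSwapL l X) ∪ {swapVarL l xs x, y})
        (mk_union_small hinf
          (occ_qSwapL_small hinf ((occ_small hinf hreg).1 X hgX) l)
          (small_finite hinf ((Set.finite_singleton _).insert _)))
      simp only [Set.mem_union, Set.mem_insert_iff, Set.mem_singleton_iff, not_or] at hz
      obtain ⟨hz1, hz2, hz3⟩ := hz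
      have hzocc : z ∉ occ (qSwap y (swapVarL l xs x) xs (qSwapL l X)) := by
        intro hc
        rcases (occ_qSwap_subset y (swapVarL l xs x) xs).1 _ hc with h | h
        · exact hz1 h
        · simp only [Set.mem_insert_iff, Set.mem_singleton_iff] at h
          rcases h with rfl | rfl
          · exact hz3 rfl
          · exact hz2 rfl
      refine AlphaAbs.qAbs (y := z) ?_ (fresh_of_not_occ hz1) (fresh_of_not_occ hzocc) ?_
      · simp only [Set.mem_insert_iff, Set.mem_singleton_iff, not_or]
        exact ⟨hz2, hz3⟩
      · refine alpha_relist (l1 := [(z, swapVarL l xs x, xs)])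
          (l2 := [(z, y, xs), (y, swapVarL l xs x, xs)]) hinf hreg glX ?_
        intro ys v hfree
        simp only [swapVarL_cons, swapVarL_nil]
        by_cases hss : ys = xs
        · subst hss
          simp only [swapVarS_same]
          have hvz : v ≠ z := fun hc => hz1 (hc ▸ notfresh_occ hfree)
          have hvy : v ≠ y := fun hc => hy1 (hc ▸ notfresh_occ hfree)
          exact (swap_comp z (swapVarL l ys x) y v hvz hvy).symm
        · simp only [swapVarS_ne hss]
    rw [eq1]
    have gsw : QGood (qSwap y (swapVarL l xs x) xs (qSwapL l X)) := good_qSwap glX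
    rw [← Abs_tmk hinf hreg gsw]
    exact h4 xs y _ p (good_tmk gsw) (ih ((y, swapVarL l xs x, xs) :: l) p) hy3

end Aux8
/-- fresh induction. -/
theorem fresh_induction (hinf : Cardinal.aleph0 ≤ Cardinal.mk var)
    (hreg : (Cardinal.mk var).IsRegular)
    {param : Type u} (varsOf : param → varsort → Set var)
    (φ : Term var varsort index bindex opsym → param → Prop)
    (φAbs : Abstr var varsort index bindex opsym → param → Prop)
    (h1 : ∀ xs p, Cardinal.mk (varsOf p xs) < Cardinal.mk var)
    (h2 : ∀ xs x p, φ (Var xs x) p)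
    (h3 : ∀ d inp binp p, smallDom var inp → smallDom var binp →
      liftP (fun X => good X ∧ ∀ q, φ X q) inp →
      liftP (fun A => goodAbs A ∧ ∀ q, φAbs A q) binp →
      φ (Op d inp binp) p)
    (h4 : ∀ xs x X p, good X → φ X p → x ∉ varsOf p xs → φAbs (Abs xs x X) p) :
    (∀ X p, good X → φ X p) ∧ (∀ A p, goodAbs A → φAbs A p) := by
  obtain ⟨main1, main2⟩ := fresh_main_aux hinf hreg varsOf φ φAbs h1 h2 h3 h4
  constructor
  · intro X p hg
    have := main1 (trep X) hg [] p
    rw [qSwapL_nil] at this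
    rwa [show tmk (trep X) = X from Quot.out_eq X] at this
  · intro A p hg
    have := main2 (arep A) hg [] p
    rw [qSwapLAbs_nil] at this
    rwa [show amk (arep A) = A from Quot.out_eq A] at this

end Binding
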